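/- Let λ₁ ∈ ℂ with Im(λ₁) ≠ 0 and λ₁ ∉ {i, −i}, let n be a positive integer, r ∈ {1,−1}, and let s₁, s₂, χ, τ ∈ ℝ. Suppose A, B, C, D ∈ ℂ satisfy the four relations: (i) A − B + (r/(2n))C − (r/(2n))D = 0; (ii) iλ₁A − iλ₁*B − (r/(2n))C − (r/(2n))D − 4τ = 0; (iii) iλ₁²A − i(λ₁*)²B − (ir/(2n))C + (ir/(2n))D − 2χ − 2τs₁ = 0; (iv) iλ₁³A − i(λ₁*)³B + (r/(2n))C + (r/(2n))D + (1/2)(4s₂ − 3s₁²)τ − s₁χ = 0. Then for every λ ∈ ℂ with λ ∉ {λ₁, λ₁*, i, −i}: −(i/2)·A/(λ₁−λ) + (i/2)·B/(λ₁*−λ) − (ir/(4n))·C/(i−λ) + (ir/(4n))·D/(−i−λ) = [8τλ² + (4χ + 4s₁τ − 16Re(λ₁)τ)λ + 8|λ₁|²τ − 8Re(λ₁)s₁τ + 3s₁²τ − 4s₂τ + 8τ − 8Re(λ₁)χ + 2s₁χ] / (4(λ−λ₁)(λ−λ₁*)(λ²+1)). -/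

import Mathlib

noncomputable section

open Complex

set_option maxHeartbeats 2000000 in
/-- Under the four normalization relations of the g₂-function, the partial-fraction
combination −(i/2)A/(λ₁−λ) + (i/2)B/(λ₁*−λ) − (ir/(4n))C/(i−λ) + (ir/(4n))D/(−i−λ)
equals an explicit rational function with quadratic numerator. -/
theorem g2_partial_fraction_identity (lam1 : ℂ) (him : lam1.im ≠ 0)
    (hne1 : lam1 ≠ Complex.I) (hne2 : lam1 ≠ -Complex.I)
    (n : ℕ) (hn : 0 < n) (r : ℝ) (hr : r = 1 ∨ r = -1)
    (s₁ s₂ χ τ : ℝ) (A B C D : ℂ)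
    (h1 : A - B + ((r : ℂ) / (2 * (n : ℂ))) * C - ((r : ℂ) / (2 * (n : ℂ))) * D = 0)
    (h2 : Complex.I * lam1 * A - Complex.I * (starRingEnd ℂ lam1) * B -
        ((r : ℂ) / (2 * (n : ℂ))) * C - ((r : ℂ) / (2 * (n : ℂ))) * D - 4 * (τ : ℂ) = 0)
    (h3 : Complex.I * lam1 ^ 2 * A - Complex.I * (starRingEnd ℂ lam1) ^ 2 * B -
        (Complex.I * (r : ℂ) / (2 * (n : ℂ))) * C +
        (Complex.I * (r : ℂ) / (2 * (n : ℂ))) * D - 2 * (χ : ℂ) - 2 * (τ : ℂ) * (s₁ : ℂ) = 0)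
    (h4 : Complex.I * lam1 ^ 3 * A - Complex.I * (starRingEnd ℂ lam1) ^ 3 * B +
        ((r : ℂ) / (2 * (n : ℂ))) * C + ((r : ℂ) / (2 * (n : ℂ))) * D +
        (1 / 2 : ℂ) * (4 * (s₂ : ℂ) - 3 * (s₁ : ℂ) ^ 2) * (τ : ℂ) -
        (s₁ : ℂ) * (χ : ℂ) = 0) :
    ∀ lam : ℂ, lam ≠ lam1 → lam ≠ starRingEnd ℂ lam1 →
      lam ≠ Complex.I → lam ≠ -Complex.I →
      -(Complex.I / 2) * A / (lam1 - lam) +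
          (Complex.I / 2) * B / (starRingEnd ℂ lam1 - lam) -
          (Complex.I * (r : ℂ) / (4 * (n : ℂ))) * C / (Complex.I - lam) +
          (Complex.I * (r : ℂ) / (4 * (n : ℂ))) * D / (-Complex.I - lam) =
        (8 * (τ : ℂ) * lam ^ 2 +
            (4 * (χ : ℂ) + 4 * (s₁ : ℂ) * (τ : ℂ) - 16 * (lam1.re : ℂ) * (τ : ℂ)) * lam +
            8 * ((‖lam1‖ : ℝ) : ℂ) ^ 2 * (τ : ℂ) -
            8 * (lam1.re : ℂ) * (s₁ : ℂ) * (τ : ℂ) + 3 * (s₁ : ℂ) ^ 2 * (τ : ℂ) -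
            4 * (s₂ : ℂ) * (τ : ℂ) + 8 * (τ : ℂ) - 8 * (lam1.re : ℂ) * (χ : ℂ) +
            2 * (s₁ : ℂ) * (χ : ℂ)) /
          (4 * (lam - lam1) * (lam - starRingEnd ℂ lam1) * (lam ^ 2 + 1)) := by
  intro lam ha hb hi hmi
  set m : ℂ := starRingEnd ℂ lam1 with hm
  have hre : (lam1.re : ℂ) = (lam1 + m) / 2 := by
    rw [hm, Complex.add_conj]; push_cast; ring
  have habs : ((‖lam1‖ : ℝ) : ℂ) ^ 2 = lam1 * m := by
    rw [hm, Complex.mul_conj, ← Complex.sq_norm]; push_cast; ring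
  rw [hre, habs]
  have hnn : (n : ℂ) ≠ 0 := Nat.cast_ne_zero.mpr hn.ne'
  have d1 : lam1 - lam ≠ 0 := sub_ne_zero.mpr (Ne.symm ha)
  have d2 : m - lam ≠ 0 := sub_ne_zero.mpr (Ne.symm hb)
  have d3 : Complex.I - lam ≠ 0 := sub_ne_zero.mpr (Ne.symm hi)
  have d4 : -Complex.I - lam ≠ 0 := sub_ne_zero.mpr (Ne.symm hmi)
  have d5 : lam - lam1 ≠ 0 := sub_ne_zero.mpr ha
  have d6 : lam - m ≠ 0 := sub_ne_zero.mpr hb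
  have d7 : lam ^ 2 + 1 ≠ 0 := by
    have he : lam ^ 2 + 1 = (Complex.I - lam) * (-Complex.I - lam) := by
      have hI : Complex.I ^ 2 = -1 := Complex.I_sq
      linear_combination hI
    rw [he]; exact mul_ne_zero d3 d4
  set u : ℂ := (r : ℂ) / (2 * (n : ℂ)) * C with hu
  set v : ℂ := (r : ℂ) / (2 * (n : ℂ)) * D with hv
  have hC : Complex.I * (r : ℂ) / (4 * (n : ℂ)) * C / (Complex.I - lam)
      = Complex.I / 2 * u / (Complex.I - lam) := by
    rw [hu]; field_simp; ring
  have hD : Complex.I * (r : ℂ) / (4 * (n : ℂ)) * D / (-Complex.I - lam)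
      = Complex.I / 2 * v / (-Complex.I - lam) := by
    rw [hv]; field_simp; ring
  rw [hC, hD]
  rw [div_add_div _ _ d1 d2, div_sub_div _ _ (mul_ne_zero d1 d2) d3,
    div_add_div _ _ (mul_ne_zero (mul_ne_zero d1 d2) d3) d4,
    div_eq_div_iff (by exact mul_ne_zero (mul_ne_zero (mul_ne_zero d1 d2) d3) d4)
      (by exact mul_ne_zero (mul_ne_zero (mul_ne_zero (by norm_num) d5) d6) d7)]
  have hI : Complex.I ^ 2 = -1 := Complex.I_sq
  linear_combination
    ((lam1 - lam) * (m - lam) * (Complex.I - lam) * (-Complex.I - lam)) *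
      ((2 * Complex.I * (lam ^ 3 - (lam1 + m) * lam ^ 2 + (lam1 * m + 1) * lam - (lam1 + m))) * h1
        + (2 * (lam ^ 2 - (lam1 + m) * lam + (lam1 * m + 1))) * h2
        + (2 * (lam - (lam1 + m))) * h3 + 2 * h4)
    + (2 * lam * (lam - lam1) ^ 2 * (lam - m) ^ 2 *
        (Complex.I * (u - v) + lam * (u + v))) * hI
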